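/- Let Γ be a graph (in Serre's sense), T a maximal subtree of Γ, and v a vertex. Then the fundamental group π₁(Γ, v) of the graph (all vertex and edge groups trivial) is a free group, freely generated by the elements ε(e) = [v, r(e)]·e·[s(e), v] for e ranging over an orientation of the edges of Γ not in T, where [x, y] denotes the unique reduced path in T from y to x. -/

import Mathlib

/-- A graph in the sense of Serre. -/
structure SerreGraph where
  V : Type
  E : Type
  r : E → V
  s : E → V
  bar : E → E
  bar_ne : ∀ e, bar e ≠ e
  bar_bar : ∀ e, bar (bar e) = e
  s_eq : ∀ e, s e = r (bar e)

namespace SerreGraph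

/-- `IsPathFrom x y p` : the edge list `p` is a path with range `x` and source `y`. -/
def IsPathFrom (Γ : SerreGraph) : Γ.V → Γ.V → List Γ.E → Prop
  | x, y, [] => x = y
  | x, y, e :: p => Γ.r e = x ∧ Γ.IsPathFrom (Γ.s e) y p

/-- A path is reduced if it has no immediate backtracking. -/
def Reduced (Γ : SerreGraph) (p : List Γ.E) : Prop :=
  List.Chain' (fun e f => f ≠ Γ.bar e) p

end SerreGraph

/-- The relations `ē · e = 1` defining the path group of a graph of trivial groups. -/
def pathRels (Γ : SerreGraph) : Set (FreeGroup Γ.E) :=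
  Set.range fun e : Γ.E => FreeGroup.of (Γ.bar e) * FreeGroup.of e

/-- The path group of a graph of trivial groups: the free group on the edges modulo
the relations `ē = e⁻¹`. -/
def PathGroup (Γ : SerreGraph) : Type :=
  FreeGroup Γ.E ⧸ Subgroup.normalClosure (pathRels Γ)

instance (Γ : SerreGraph) : Group (PathGroup Γ) :=
  inferInstanceAs (Group (FreeGroup Γ.E ⧸ Subgroup.normalClosure (pathRels Γ)))

/-- The canonical projection from the free group on edges to the path group. -/
def toPathGroup (Γ : SerreGraph) : FreeGroup Γ.E →* PathGroup Γ :=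
  QuotientGroup.mk' _

/-- The element of the path group determined by a list of edges. -/
def pathElem (Γ : SerreGraph) (p : List Γ.E) : PathGroup Γ :=
  toPathGroup Γ (p.map FreeGroup.of).prod

/-- The fundamental group `π₁(Γ, v)` of a graph of trivial groups: the subgroup of
the path group consisting of the elements represented by loops at `v` (formally, the
subgroup generated by the loop elements, which coincides with the set of loop
elements). -/
def loopSubgroup (Γ : SerreGraph) (v : Γ.V) : Subgroup (PathGroup Γ) :=
  Subgroup.closure {g : PathGroup Γ | ∃ p : List Γ.E, Γ.IsPathFrom v v p ∧ g = pathElem Γ p}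
open scoped Classical

namespace SerreGraph

variable (Γ : SerreGraph)

theorem isPathFrom_append {x y z : Γ.V} {p q : List Γ.E}
    (hp : Γ.IsPathFrom x z p) (hq : Γ.IsPathFrom z y q) : Γ.IsPathFrom x y (p ++ q) := by
  induction p generalizing x with
  | nil => cases hp; simpa
  | cons e p ih => exact ⟨hp.1, ih hp.2⟩

theorem isPathFrom_revBar {x y : Γ.V} {p : List Γ.E} (hp : Γ.IsPathFrom x y p) :
    Γ.IsPathFrom y x ((p.map Γ.bar).reverse) := by
  induction p generalizing x with
  | nil => exact hp.symm
  | cons e p ih =>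
    have : Γ.IsPathFrom (Γ.s e) x [Γ.bar e] := by
      refine ⟨(Γ.s_eq e).symm, ?_⟩
      show Γ.s (Γ.bar e) = x
      rw [Γ.s_eq, Γ.bar_bar]; exact hp.1
    simpa using Γ.isPathFrom_append (ih hp.2) this

theorem toPathGroup_bar (e : Γ.E) :
    toPathGroup Γ (FreeGroup.of (Γ.bar e)) = (toPathGroup Γ (FreeGroup.of e))⁻¹ := by
  rw [eq_inv_iff_mul_eq_one, ← map_mul]
  exact (QuotientGroup.eq_one_iff _).mpr
    (Subgroup.subset_normalClosure ⟨e, rfl⟩)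

theorem pathElem_nil : pathElem Γ [] = 1 := rfl

theorem pathElem_cons (e : Γ.E) (p : List Γ.E) :
    pathElem Γ (e :: p) = toPathGroup Γ (FreeGroup.of e) * pathElem Γ p := by
  simp [pathElem, map_mul]

theorem pathElem_append (p q : List Γ.E) :
    pathElem Γ (p ++ q) = pathElem Γ p * pathElem Γ q := by
  simp [pathElem, map_mul]

theorem pathElem_revBar (p : List Γ.E) :
    pathElem Γ ((p.map Γ.bar).reverse) = (pathElem Γ p)⁻¹ := by
  induction p with
  | nil => simp [pathElem]
  | cons e p ih =>
    simp only [List.map_cons, List.reverse_cons, pathElem_append, pathElem_cons, ih]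
    simp [pathElem_cons, pathElem_nil, toPathGroup_bar, mul_assoc]

theorem reduce_path (T : Set Γ.E) {x y : Γ.V} (p : List Γ.E)
    (hp : Γ.IsPathFrom x y p) (hT : ∀ e ∈ p, e ∈ T) :
    ∃ q : List Γ.E, Γ.IsPathFrom x y q ∧ Γ.Reduced q ∧ (∀ e ∈ q, e ∈ T) ∧
      pathElem Γ q = pathElem Γ p := by
  induction p generalizing x with
  | nil => exact ⟨[], hp, List.isChain_nil, by simp, rfl⟩
  | cons e p ih =>
    obtain ⟨q, hq, hqred, hqT, hqel⟩ := ih hp.2 (fun f hf => hT f (List.mem_cons_of_mem _ hf))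
    cases q with
    | nil =>
      refine ⟨[e], ⟨hp.1, hq⟩, List.isChain_singleton e, ?_, ?_⟩
      · intro f hf; rw [List.mem_singleton] at hf
        exact hf ▸ hT e (List.mem_cons_self)
      · simp only [pathElem_cons, ← hqel]
    | cons f q =>
      by_cases hfe : f = Γ.bar e
      · subst hfe
        refine ⟨q, ?_, hqred.tail, fun g hg => hqT g (List.mem_cons_of_mem _ hg), ?_⟩
        · have h1 : Γ.s (Γ.bar e) = x := by rw [Γ.s_eq, Γ.bar_bar]; exact hp.1
          rw [← h1]; exact hq.2
        · rw [pathElem_cons, ← hqel, pathElem_cons, toPathGroup_bar, mul_inv_cancel_left]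
      · refine ⟨e :: f :: q, ⟨hp.1, hq⟩, List.isChain_cons_cons.mpr ⟨hfe, hqred⟩, ?_, ?_⟩
        · intro g hg
          rcases List.mem_cons.mp hg with h | h
          · exact h ▸ hT e (List.mem_cons_self)
          · exact hqT g h
        · rw [pathElem_cons, hqel, pathElem_cons]

end SerreGraph

noncomputable section

namespace SerreGraph

/-- Label of an edge in the free group on oriented non-tree edges. -/
def edgeLabel (Γ : SerreGraph) (O T : Set Γ.E) (e : Γ.E) :
    FreeGroup {e : Γ.E // e ∈ O ∧ e ∉ T} :=
  if h : e ∈ O ∧ e ∉ T then FreeGroup.of ⟨e, h⟩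
  else if h' : Γ.bar e ∈ O ∧ Γ.bar e ∉ T then (FreeGroup.of ⟨Γ.bar e, h'⟩)⁻¹
  else 1

theorem edgeLabel_bar (Γ : SerreGraph) (O T : Set Γ.E)
    (hTbar : ∀ e ∈ T, Γ.bar e ∈ T) (hO : ∀ e : Γ.E, e ∈ O ↔ Γ.bar e ∉ O) (e : Γ.E) :
    edgeLabel Γ O T (Γ.bar e) = (edgeLabel Γ O T e)⁻¹ := by
  by_cases h : e ∈ O ∧ e ∉ T
  · have h1 : ¬ (Γ.bar e ∈ O ∧ Γ.bar e ∉ T) := fun hb => ((hO e).mp h.1) hb.1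
    have h2 : Γ.bar (Γ.bar e) ∈ O ∧ Γ.bar (Γ.bar e) ∉ T := by rw [Γ.bar_bar]; exact h
    have h3 : (⟨Γ.bar (Γ.bar e), h2⟩ : {e : Γ.E // e ∈ O ∧ e ∉ T}) = ⟨e, h⟩ :=
      Subtype.ext (Γ.bar_bar e)
    rw [edgeLabel, edgeLabel, dif_neg h1, dif_pos h2, dif_pos h, h3]
  · by_cases h' : Γ.bar e ∈ O ∧ Γ.bar e ∉ T
    · rw [edgeLabel, edgeLabel, dif_pos h', dif_neg h, dif_pos h', inv_inv]
    · have h2 : ¬ (Γ.bar (Γ.bar e) ∈ O ∧ Γ.bar (Γ.bar e) ∉ T) := by rw [Γ.bar_bar]; exact h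
      rw [edgeLabel, edgeLabel, dif_neg h', dif_neg h2, dif_neg h, dif_neg h', inv_one]

theorem edgeLabel_of_mem (Γ : SerreGraph) (O T : Set Γ.E)
    (hTbar : ∀ e ∈ T, Γ.bar e ∈ T) {e : Γ.E} (he : e ∈ T) :
    edgeLabel Γ O T e = 1 := by
  have h1 : ¬ (e ∈ O ∧ e ∉ T) := fun h => h.2 he
  have h2 : ¬ (Γ.bar e ∈ O ∧ Γ.bar e ∉ T) := fun h => h.2 (hTbar e he)
  rw [edgeLabel, dif_neg h1, dif_neg h2]

/-- The retraction from the path group to the free group on non-tree oriented edges. -/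
def retr (Γ : SerreGraph) (O T : Set Γ.E)
    (hbar : ∀ e : Γ.E, edgeLabel Γ O T (Γ.bar e) = (edgeLabel Γ O T e)⁻¹) :
    PathGroup Γ →* FreeGroup {e : Γ.E // e ∈ O ∧ e ∉ T} :=
  QuotientGroup.lift _ (FreeGroup.lift (edgeLabel Γ O T)) (by
    refine Subgroup.normalClosure_le_normal ?_
    rintro _ ⟨e, rfl⟩
    rw [SetLike.mem_coe, MonoidHom.mem_ker, map_mul, FreeGroup.lift_apply_of, FreeGroup.lift_apply_of,
      hbar e, inv_mul_cancel])

theorem retr_toPathGroup (Γ : SerreGraph) (O T : Set Γ.E)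
    (hbar : ∀ e : Γ.E, edgeLabel Γ O T (Γ.bar e) = (edgeLabel Γ O T e)⁻¹) (w : FreeGroup Γ.E) :
    retr Γ O T hbar (toPathGroup Γ w) = FreeGroup.lift (edgeLabel Γ O T) w := rfl

theorem retr_pathElem (Γ : SerreGraph) (O T : Set Γ.E)
    (hbar : ∀ e : Γ.E, edgeLabel Γ O T (Γ.bar e) = (edgeLabel Γ O T e)⁻¹) (p : List Γ.E) :
    retr Γ O T hbar (pathElem Γ p) = (p.map (edgeLabel Γ O T)).prod := by
  rw [pathElem, retr_toPathGroup, map_list_prod, List.map_map]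
  congr 1
  ext e
  simp [FreeGroup.lift_apply_of]

theorem retr_pathElem_tree (Γ : SerreGraph) (O T : Set Γ.E)
    (hTbar : ∀ e ∈ T, Γ.bar e ∈ T)
    (hbar : ∀ e : Γ.E, edgeLabel Γ O T (Γ.bar e) = (edgeLabel Γ O T e)⁻¹) (p : List Γ.E)
    (hp : ∀ e ∈ p, e ∈ T) :
    retr Γ O T hbar (pathElem Γ p) = 1 := by
  rw [retr_pathElem]
  apply List.prod_eq_one
  intro x hx
  rw [List.mem_map] at hx
  obtain ⟨e, he, rfl⟩ := hx
  exact edgeLabel_of_mem Γ O T hTbar (hp e he)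

end SerreGraph

end
/-- for a connected graph `Γ` with maximal subtree `T`, orientation `O`
and base vertex `v`, the fundamental group `π₁(Γ, v)` is free, freely generated by the
elements `ε(e) = [v, r e] · e · [s e, v]` for `e` ranging over the oriented edges not
in `T`; here `c x` denotes the unique reduced path in `T` with range `v` and source
`x`, so `[v, x] = pathElem (c x)` and `[x, v] = (pathElem (c x))⁻¹`.  Free generation
is expressed by saying that the induced homomorphism from the free group on these
edges is injective with range `π₁(Γ, v)`. -/
theorem fundamental_group_free_on_edges_outside_tree
    (Γ : SerreGraph) (v : Γ.V) (T : Set Γ.E)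
    (hTbar : ∀ e ∈ T, Γ.bar e ∈ T)
    (hTspan : ∀ x y : Γ.V, ∃ p : List Γ.E, Γ.IsPathFrom x y p ∧ ∀ e ∈ p, e ∈ T)
    (hTtree : ∀ (x : Γ.V) (p : List Γ.E),
      Γ.IsPathFrom x x p → Γ.Reduced p → (∀ e ∈ p, e ∈ T) → p = [])
    (O : Set Γ.E) (hO : ∀ e : Γ.E, e ∈ O ↔ Γ.bar e ∉ O)
    (c : Γ.V → List Γ.E)
    (hc : ∀ x : Γ.V, Γ.IsPathFrom v x (c x) ∧ Γ.Reduced (c x) ∧ ∀ e ∈ c x, e ∈ T) :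
    Function.Injective
      ⇑(FreeGroup.lift (fun b : {e : Γ.E // e ∈ O ∧ e ∉ T} =>
        pathElem Γ (c (Γ.r b.1)) * toPathGroup Γ (FreeGroup.of b.1) *
          (pathElem Γ (c (Γ.s b.1)))⁻¹)) ∧
    MonoidHom.range
      (FreeGroup.lift (fun b : {e : Γ.E // e ∈ O ∧ e ∉ T} =>
        pathElem Γ (c (Γ.r b.1)) * toPathGroup Γ (FreeGroup.of b.1) *
          (pathElem Γ (c (Γ.s b.1)))⁻¹)) = loopSubgroup Γ v := by

  classical
  open SerreGraph in
  set L := FreeGroup.lift (fun b : {e : Γ.E // e ∈ O ∧ e ∉ T} =>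
      pathElem Γ (c (Γ.r b.1)) * toPathGroup Γ (FreeGroup.of b.1) *
        (pathElem Γ (c (Γ.s b.1)))⁻¹) with hLdef
  have hcv : c v = [] := hTtree v (c v) (hc v).1 (hc v).2.1 (hc v).2.2
  have hbar : ∀ e : Γ.E, Γ.edgeLabel O T (Γ.bar e) = (Γ.edgeLabel O T e)⁻¹ :=
    Γ.edgeLabel_bar O T hTbar hO
  -- the loop representing ε(e)
  have heps : ∀ e : Γ.E,
      Γ.IsPathFrom v v (c (Γ.r e) ++ [e] ++ ((c (Γ.s e)).map Γ.bar).reverse) ∧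
      pathElem Γ (c (Γ.r e) ++ [e] ++ ((c (Γ.s e)).map Γ.bar).reverse) =
        pathElem Γ (c (Γ.r e)) * toPathGroup Γ (FreeGroup.of e) *
          (pathElem Γ (c (Γ.s e)))⁻¹ := by
    intro e
    constructor
    · exact Γ.isPathFrom_append (Γ.isPathFrom_append (hc _).1 ⟨rfl, rfl⟩)
        (Γ.isPathFrom_revBar (hc _).1)
    · rw [Γ.pathElem_append, Γ.pathElem_append, Γ.pathElem_revBar, Γ.pathElem_cons]
      simp [SerreGraph.pathElem_nil]
  -- tree edges give trivial ε
  have keyT : ∀ e ∈ T, pathElem Γ (c (Γ.r e)) * toPathGroup Γ (FreeGroup.of e) *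
      (pathElem Γ (c (Γ.s e)))⁻¹ = 1 := by
    intro e he
    have hmem : ∀ f ∈ c (Γ.r e) ++ [e] ++ ((c (Γ.s e)).map Γ.bar).reverse, f ∈ T := by
      intro f hf
      simp only [List.mem_append, List.mem_reverse, List.mem_map, List.mem_singleton] at hf
      rcases hf with (hf | rfl) | ⟨g, hg, rfl⟩
      · exact (hc _).2.2 f hf
      · exact he
      · exact hTbar g ((hc _).2.2 g hg)
    obtain ⟨q, hq, hqr, hqT, hqel⟩ := Γ.reduce_path T _ (heps e).1 hmem
    have hq0 : q = [] := hTtree v q hq hqr hqT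
    rw [← (heps e).2, ← hqel, hq0, SerreGraph.pathElem_nil]
  -- the key induction for the range
  have key : ∀ (p : List Γ.E) (x y : Γ.V), Γ.IsPathFrom x y p →
      pathElem Γ (c x) * pathElem Γ p * (pathElem Γ (c y))⁻¹ ∈ L.range := by
    intro p
    induction p with
    | nil =>
      intro x y h
      obtain rfl : x = y := h
      rw [SerreGraph.pathElem_nil, mul_one, mul_inv_cancel]
      exact one_mem _
    | cons e p ih =>
      intro x y h
      obtain ⟨hre, hrest⟩ := h
      have decomp : pathElem Γ (c x) * pathElem Γ (e :: p) * (pathElem Γ (c y))⁻¹ =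
          (pathElem Γ (c (Γ.r e)) * toPathGroup Γ (FreeGroup.of e) *
            (pathElem Γ (c (Γ.s e)))⁻¹) *
          (pathElem Γ (c (Γ.s e)) * pathElem Γ p * (pathElem Γ (c y))⁻¹) := by
        rw [← hre, SerreGraph.pathElem_cons]
        group
      rw [decomp]
      refine mul_mem ?_ (ih (Γ.s e) y hrest)
      by_cases heT : e ∈ T
      · rw [keyT e heT]; exact one_mem _
      · by_cases heO : e ∈ O
        · exact ⟨FreeGroup.of ⟨e, heO, heT⟩, by rw [hLdef, FreeGroup.lift_apply_of]⟩
        · have hbO : Γ.bar e ∈ O := by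
            by_contra hb; exact heO ((hO e).mpr hb)
          have hbT : Γ.bar e ∉ T := fun hbe => heT (Γ.bar_bar e ▸ hTbar _ hbe)
          refine ⟨(FreeGroup.of ⟨Γ.bar e, hbO, hbT⟩)⁻¹, ?_⟩
          rw [map_inv, hLdef, FreeGroup.lift_apply_of]
          have h3 : Γ.r (Γ.bar e) = Γ.s e := (Γ.s_eq e).symm
          have h4 : Γ.s (Γ.bar e) = Γ.r e := by rw [Γ.s_eq, Γ.bar_bar]
          rw [h3, h4, Γ.toPathGroup_bar]
          group
  constructor
  · -- injectivity via the retraction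
    have comp : (Γ.retr O T hbar).comp L = MonoidHom.id _ := by
      apply FreeGroup.ext_hom
      intro b
      rw [MonoidHom.comp_apply, MonoidHom.id_apply, hLdef, FreeGroup.lift_apply_of,
        map_mul, map_mul, map_inv,
        Γ.retr_pathElem_tree O T hTbar hbar _ ((hc _).2.2),
        Γ.retr_pathElem_tree O T hTbar hbar _ ((hc _).2.2),
        Γ.retr_toPathGroup, FreeGroup.lift_apply_of]
      rw [SerreGraph.edgeLabel, dif_pos b.2]
      simp
    intro a b hab
    have ha := DFunLike.congr_fun comp a
    have hb := DFunLike.congr_fun comp b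
    rw [MonoidHom.comp_apply, MonoidHom.id_apply] at ha hb
    rw [← ha, ← hb, hab]
  · apply le_antisymm
    · rw [hLdef, FreeGroup.range_lift_eq_closure]
      refine (Subgroup.closure_le _).mpr ?_
      rintro g ⟨b, rfl⟩
      apply Subgroup.subset_closure
      exact ⟨c (Γ.r b.1) ++ [b.1] ++ ((c (Γ.s b.1)).map Γ.bar).reverse,
        (heps b.1).1, ((heps b.1).2).symm⟩
    · refine (Subgroup.closure_le _).mpr ?_
      rintro g ⟨p, hp, rfl⟩
      have hk := key p v v hp
      rwa [hcv, SerreGraph.pathElem_nil, one_mul, inv_one, mul_one] at hk
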